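/- Multiplicativity of the generic Euler number under products: let (a_μ) and (b_ν) be the Betti numbers of compact manifolds M and N, and suppose χ_0(M) = ⋯ = χ_{r−1}(M) = 0 and χ_0(N) = ⋯ = χ_{s−1}(N) = 0. Then χ_{r+s}(M × N) = χ_r(M)·χ_s(N), where the Betti numbers of M × N are given by the Künneth formula c_j = ∑_{μ+ν=j} a_μ b_ν. -/

import Mathlib

open Polynomial Finset

private lemma coeffAux (N k : ℕ) (u : ℕ → ℤ) :
    (∑ j ∈ Finset.range N, Polynomial.C ((-1 : ℤ) ^ j * u j) * (Polynomial.X + 1) ^ j).coeff k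
      = ∑ j ∈ Finset.range N, (j.choose k : ℤ) * (-1) ^ j * u j := by
  rw [finset_sum_coeff]
  refine Finset.sum_congr rfl fun j _ => ?_
  rw [coeff_C_mul, coeff_X_add_one_pow]
  ring

/-- Multiplicativity of the generic Euler number under products (combinatorial form):
given finitely supported sequences of Betti numbers `(a_μ)`, `(b_ν)` with
`χ_k(a) = 0` for `k < r` and `χ_k(b) = 0` for `k < s`, the Künneth sequence
`c_j = ∑_{μ+ν=j} a_μ b_ν` satisfies `χ_{r+s}(c) = χ_r(a)·χ_s(b)`,
where `χ_k(b) = (−1)^k ∑_j C(j,k)(−1)^j b_j`. -/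
theorem stmt_6 (M r s : ℕ) (a b : ℕ → ℕ)
    (ha : ∀ j, M ≤ j → a j = 0) (hb : ∀ j, M ≤ j → b j = 0)
    (hva : ∀ k < r,
      (-1 : ℤ) ^ k * ∑ j ∈ Finset.range M, (j.choose k : ℤ) * (-1) ^ j * (a j : ℤ) = 0)
    (hvb : ∀ k < s,
      (-1 : ℤ) ^ k * ∑ j ∈ Finset.range M, (j.choose k : ℤ) * (-1) ^ j * (b j : ℤ) = 0) :
    (-1 : ℤ) ^ (r + s) * (∑ j ∈ Finset.range (2 * M),
        (j.choose (r + s) : ℤ) * (-1) ^ j *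
          (∑ p ∈ Finset.HasAntidiagonal.antidiagonal j, (a p.1 : ℤ) * (b p.2 : ℤ))) =
      ((-1 : ℤ) ^ r * ∑ j ∈ Finset.range M, (j.choose r : ℤ) * (-1) ^ j * (a j : ℤ)) *
      ((-1 : ℤ) ^ s * ∑ j ∈ Finset.range M, (j.choose s : ℤ) * (-1) ^ j * (b j : ℤ)) := by
  set pa : ℤ[X] := ∑ j ∈ Finset.range M, C ((-1 : ℤ) ^ j * (a j : ℤ)) * (X + 1) ^ j with hpa
  set pb : ℤ[X] := ∑ j ∈ Finset.range M, C ((-1 : ℤ) ^ j * (b j : ℤ)) * (X + 1) ^ j with hpb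
  set pc : ℤ[X] := ∑ j ∈ Finset.range (2 * M),
      C ((-1 : ℤ) ^ j * ∑ p ∈ Finset.HasAntidiagonal.antidiagonal j, (a p.1 : ℤ) * (b p.2 : ℤ)) * (X + 1) ^ j
    with hpc
  -- vanishing of low coefficients
  have hpa0 : ∀ k < r, pa.coeff k = 0 := by
    intro k hk
    rw [hpa, coeffAux]
    rcases mul_eq_zero.1 (hva k hk) with h | h
    · exact absurd h (by positivity)
    · exact h
  have hpb0 : ∀ k < s, pb.coeff k = 0 := by
    intro k hk
    rw [hpb, coeffAux]
    rcases mul_eq_zero.1 (hvb k hk) with h | h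
    · exact absurd h (by positivity)
    · exact h
  obtain ⟨qa, hqa⟩ : X ^ r ∣ pa := X_pow_dvd_iff.2 hpa0
  obtain ⟨qb, hqb⟩ : X ^ s ∣ pb := X_pow_dvd_iff.2 hpb0
  -- the pairwise term
  set f : ℕ × ℕ → ℤ[X] := fun p =>
    C ((-1 : ℤ) ^ (p.1 + p.2) * ((a p.1 : ℤ) * (b p.2 : ℤ))) * (X + 1) ^ (p.1 + p.2) with hf
  have hfzero : ∀ p : ℕ × ℕ, M ≤ p.1 ∨ M ≤ p.2 → f p = 0 := by
    rintro ⟨x, y⟩ (h | h) <;> simp [hf, ha x, hb y, *]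
  -- pa * pb = pc
  have hmul : pa * pb = pc := by
    have hL : pa * pb = ∑ p ∈ Finset.range (2 * M) ×ˢ Finset.range (2 * M), f p := by
      have h1 : pa * pb = ∑ p ∈ Finset.range M ×ˢ Finset.range M, f p := by
        rw [hpa, hpb, Finset.sum_mul_sum, ← Finset.sum_product']
        refine Finset.sum_congr rfl fun p _ => ?_
        simp only [hf, map_mul, pow_add]
        ring
      rw [h1]
      refine Finset.sum_subset ?_ fun p hp hnp => ?_
      · exact Finset.product_subset_product
          (Finset.range_subset_range.2 (by omega)) (Finset.range_subset_range.2 (by omega))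
      · refine hfzero p ?_
        simp only [Finset.mem_product, Finset.mem_range] at hp hnp
        omega
    have hR : pc = ∑ p ∈ (Finset.range (2 * M)).biUnion Finset.HasAntidiagonal.antidiagonal, f p := by
      rw [hpc, Finset.sum_biUnion]
      · refine Finset.sum_congr rfl fun j _ => ?_
        rw [Finset.mul_sum, map_sum, Finset.sum_mul]
        refine Finset.sum_congr rfl fun p hp => ?_
        rw [Finset.HasAntidiagonal.mem_antidiagonal] at hp
        rw [← hp]
      · intro u hu v hv huv
        simp only [Finset.disjoint_left]
        intro p hpu hpv
        rw [Finset.HasAntidiagonal.mem_antidiagonal] at hpu hpv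
        exact huv (hpu ▸ hpv)
    rw [hL, hR]
    refine (Finset.sum_subset ?_ fun p hp hnp => ?_).symm
    · intro p hp
      simp only [Finset.mem_biUnion, Finset.mem_range, Finset.HasAntidiagonal.mem_antidiagonal] at hp
      obtain ⟨j, hj, hpj⟩ := hp
      simp only [Finset.mem_product, Finset.mem_range]
      omega
    · refine hfzero p ?_
      simp only [Finset.mem_product, Finset.mem_range] at hp
      simp only [Finset.mem_biUnion, Finset.mem_range, Finset.HasAntidiagonal.mem_antidiagonal] at hnp
      by_contra hc
      push_neg at hc
      exact hnp ⟨p.1 + p.2, by omega, rfl⟩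
  -- coefficient extraction
  have hcoeff : pc.coeff (r + s) = pa.coeff r * pb.coeff s := by
    have h1 : pc = X ^ (r + s) * (qa * qb) := by
      rw [← hmul, hqa, hqb, pow_add]; ring
    have h2 : pc.coeff (r + s) = (qa * qb).coeff 0 := by
      rw [h1]
      simpa using Polynomial.coeff_X_pow_mul (qa * qb) (r + s) 0
    have h3 : pa.coeff r = qa.coeff 0 := by
      have := Polynomial.coeff_X_pow_mul qa r 0
      rw [zero_add] at this
      rw [hqa, this]
    have h4 : pb.coeff s = qb.coeff 0 := by
      have := Polynomial.coeff_X_pow_mul qb s 0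
      rw [zero_add] at this
      rw [hqb, this]
    rw [h2, mul_coeff_zero, h3, h4]
  have e1 := coeffAux (2 * M) (r + s) (fun j => ∑ p ∈ Finset.HasAntidiagonal.antidiagonal j, (a p.1 : ℤ) * (b p.2 : ℤ))
  have e2 := coeffAux M r (fun j => (a j : ℤ))
  have e3 := coeffAux M s (fun j => (b j : ℤ))
  rw [← e1, ← e2, ← e3, ← hpa, ← hpb, ← hpc, hcoeff]
  ring
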